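/- Let C be the 6×6 integer matrix [[−4,1,1,0,0,1],[1,−4,1,1,0,0],[1,1,−4,1,1,0],[0,1,1,−4,1,1],[0,0,1,1,−4,1],[1,0,0,1,1,−4]] and let g_C be the 6×6 integer matrix with columns given by [[0,0,0,0,0,−1],[1,0,0,0,0,−1],[0,1,0,0,0,−1],[0,0,1,0,0,−1],[0,0,0,1,0,−1],[0,0,0,0,1,−1]] (rows as displayed). Then g_Cᵀ·C·g_C = C; for every nonzero x ∈ ℤ⁶ one has −xᵀCx ≥ 4; there are exactly 14 vectors x ∈ ℤ⁶ with −xᵀCx = 4 (i.e. exactly 7 up to sign); and these 14 minimal vectors form a single orbit under the group of matrices generated by −I and g_C. -/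

import Mathlib

open Matrix

/-- The Gram matrix `C` of the Mordell–Weil lattice `C(-1)` (negative definite, even,
rank 6). -/
def Cmat : Matrix (Fin 6) (Fin 6) ℤ :=
  !![-4,  1,  1,  0,  0,  1;
      1, -4,  1,  1,  0,  0;
      1,  1, -4,  1,  1,  0;
      0,  1,  1, -4,  1,  1;
      0,  0,  1,  1, -4,  1;
      1,  0,  0,  1,  1, -4]

/-- The matrix `g_C` of the order-7 isometry of the lattice `C`. -/
def gC : Matrix (Fin 6) (Fin 6) ℤ :=
  !![0, 0, 0, 0, 0, -1;
     1, 0, 0, 0, 0, -1;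
     0, 1, 0, 0, 0, -1;
     0, 0, 1, 0, 0, -1;
     0, 0, 0, 1, 0, -1;
     0, 0, 0, 0, 1, -1]

lemma Qexpand (x : Fin 6 → ℤ) :
    dotProduct x (Cmat.mulVec x) =
      -(4*((x 0)^2+(x 1)^2+(x 2)^2+(x 3)^2+(x 4)^2+(x 5)^2)
        - 2*((x 0)*(x 1)+(x 0)*(x 2)+(x 0)*(x 5)+(x 1)*(x 2)+(x 1)*(x 3)
            +(x 2)*(x 3)+(x 2)*(x 4)+(x 3)*(x 4)+(x 3)*(x 5)+(x 4)*(x 5))) := by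
  simp [Cmat, dotProduct, mulVec, Fin.sum_univ_succ,
    show ((2:Fin 5).succ = (3:Fin 6)) from rfl,
    show (((2:Fin 4).succ).succ = (4:Fin 6)) from rfl,
    show ((((2:Fin 3).succ).succ).succ = (5:Fin 6)) from rfl]
  ring


lemma intbound (r B s : ℤ) (h1 : 0 < r ∧ B < 3*r) (hs : 0 ≤ s) (h : r*s ≤ B) : s ≤ 2 := by
  rcases h1 with ⟨hr, hB⟩
  nlinarith

set_option maxHeartbeats 0 in
set_option synthInstance.maxSize 4000 in
lemma key (a b c d e f : ℤ)
    (h : 4*(a^2+b^2+c^2+d^2+e^2+f^2)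
        - 2*(a*b+a*c+a*f+b*c+b*d+c*d+c*e+d*e+d*f+e*f) ≤ 4) :
    (a,b,c,d,e,f) = (0,0,0,0,0,0) ∨
    (a,b,c,d,e,f) = (1,0,0,0,0,0) ∨ (a,b,c,d,e,f) = (-1,0,0,0,0,0) ∨
    (a,b,c,d,e,f) = (0,1,0,0,0,0) ∨ (a,b,c,d,e,f) = (0,-1,0,0,0,0) ∨
    (a,b,c,d,e,f) = (0,0,1,0,0,0) ∨ (a,b,c,d,e,f) = (0,0,-1,0,0,0) ∨
    (a,b,c,d,e,f) = (0,0,0,1,0,0) ∨ (a,b,c,d,e,f) = (0,0,0,-1,0,0) ∨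
    (a,b,c,d,e,f) = (0,0,0,0,1,0) ∨ (a,b,c,d,e,f) = (0,0,0,0,-1,0) ∨
    (a,b,c,d,e,f) = (0,0,0,0,0,1) ∨ (a,b,c,d,e,f) = (0,0,0,0,0,-1) ∨
    (a,b,c,d,e,f) = (1,1,1,1,1,1) ∨ (a,b,c,d,e,f) = (-1,-1,-1,-1,-1,-1) := by
  have hsa : a^2 ≤ 2 := by
    refine intbound 10920 18240 _ (by norm_num) (sq_nonneg a) ?_
    have hid : 4560*(4*(a^2+b^2+c^2+d^2+e^2+f^2) - 2*(a*b+a*c+a*f+b*c+b*d+c*d+c*e+d*e+d*f+e*f)) = 1140*(-a+4*b-c-d)^2 + 76*(-5*a+15*c-5*d-4*e)^2 + 152*(-2*a+10*d-4*e-3*f)^2 + 57*(-3*a+16*e-7*f)^2 + 39*(-9*a+19*f)^2 + 10920*a^2 := by ring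
    linarith [sq_nonneg (-a+4*b-c-d), sq_nonneg (-5*a+15*c-5*d-4*e), sq_nonneg (-2*a+10*d-4*e-3*f), sq_nonneg (-3*a+16*e-7*f), sq_nonneg (-9*a+19*f)]
  have hsb : b^2 ≤ 2 := by
    refine intbound 70707 124320 _ (by norm_num) (sq_nonneg b) ?_
    have hid : 31080*(4*(a^2+b^2+c^2+d^2+e^2+f^2) - 2*(a*b+a*c+a*f+b*c+b*d+c*d+c*e+d*e+d*f+e*f)) = 7770*(4*a-b-c-f)^2 + 518*(-5*b+15*c-4*d-4*e-f)^2 + 37*(-20*b+56*d-19*e-16*f)^2 + 3*(-44*b+185*e-80*f)^2 + 1365*(-3*b+8*f)^2 + 70707*b^2 := by ring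
    linarith [sq_nonneg (4*a-b-c-f), sq_nonneg (-5*b+15*c-4*d-4*e-f), sq_nonneg (-20*b+56*d-19*e-16*f), sq_nonneg (-44*b+185*e-80*f), sq_nonneg (-3*b+8*f)]
  have hsc : c^2 ≤ 2 := by
    refine intbound 665665 1404480 _ (by norm_num) (sq_nonneg c) ?_
    have hid : 351120*(4*(a^2+b^2+c^2+d^2+e^2+f^2) - 2*(a*b+a*c+a*f+b*c+b*d+c*d+c*e+d*e+d*f+e*f)) = 87780*(4*a-b-c-f)^2 + 5852*(15*b-5*c-4*d-f)^2 + 418*(-20*c+56*d-15*e-16*f)^2 + 30*(-76*c+209*e-72*f)^2 + 455*(-19*c+48*f)^2 + 665665*c^2 := by ring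
    linarith [sq_nonneg (4*a-b-c-f), sq_nonneg (15*b-5*c-4*d-f), sq_nonneg (-20*c+56*d-15*e-16*f), sq_nonneg (-76*c+209*e-72*f), sq_nonneg (-19*c+48*f)]
  have hsd : d^2 ≤ 2 := by
    refine intbound 16835 35520 _ (by norm_num) (sq_nonneg d) ?_
    have hid : 8880*(4*(a^2+b^2+c^2+d^2+e^2+f^2) - 2*(a*b+a*c+a*f+b*c+b*d+c*d+c*e+d*e+d*f+e*f)) = 2220*(4*a-b-c-f)^2 + 148*(15*b-5*c-4*d-f)^2 + 296*(10*c-4*d-3*e-f)^2 + 24*(-14*d+37*e-11*f)^2 + 13*(-23*d+48*f)^2 + 16835*d^2 := by ring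
    linarith [sq_nonneg (4*a-b-c-f), sq_nonneg (15*b-5*c-4*d-f), sq_nonneg (10*c-4*d-3*e-f), sq_nonneg (-14*d+37*e-11*f), sq_nonneg (-23*d+48*f)]
  have hse : e^2 ≤ 2 := by
    refine intbound 546 960 _ (by norm_num) (sq_nonneg e) ?_
    have hid : 240*(4*(a^2+b^2+c^2+d^2+e^2+f^2) - 2*(a*b+a*c+a*f+b*c+b*d+c*d+c*e+d*e+d*f+e*f)) = 60*(4*a-b-c-f)^2 + 4*(15*b-5*c-4*d-f)^2 + 8*(10*c-4*d-3*e-f)^2 + 3*(16*d-7*e-6*f)^2 + 195*(-e+2*f)^2 + 546*e^2 := by ring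
    linarith [sq_nonneg (4*a-b-c-f), sq_nonneg (15*b-5*c-4*d-f), sq_nonneg (10*c-4*d-3*e-f), sq_nonneg (16*d-7*e-6*f), sq_nonneg (-e+2*f)]
  have hsf : f^2 ≤ 2 := by
    refine intbound 10920 18240 _ (by norm_num) (sq_nonneg f) ?_
    have hid : 4560*(4*(a^2+b^2+c^2+d^2+e^2+f^2) - 2*(a*b+a*c+a*f+b*c+b*d+c*d+c*e+d*e+d*f+e*f)) = 1140*(4*a-b-c-f)^2 + 76*(15*b-5*c-4*d-f)^2 + 152*(10*c-4*d-3*e-f)^2 + 57*(16*d-7*e-6*f)^2 + 39*(19*e-10*f)^2 + 10920*f^2 := by ring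
    linarith [sq_nonneg (4*a-b-c-f), sq_nonneg (15*b-5*c-4*d-f), sq_nonneg (10*c-4*d-3*e-f), sq_nonneg (16*d-7*e-6*f), sq_nonneg (19*e-10*f)]
  have ba : -1 ≤ a ∧ a ≤ 1 := by
    have h1 : 2*a ≤ 3 := by nlinarith [sq_nonneg (a-1)]
    have h2 : -3 ≤ 2*a := by nlinarith [sq_nonneg (a+1)]
    omega
  have bb : -1 ≤ b ∧ b ≤ 1 := by
    have h1 : 2*b ≤ 3 := by nlinarith [sq_nonneg (b-1)]
    have h2 : -3 ≤ 2*b := by nlinarith [sq_nonneg (b+1)]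
    omega
  have bc : -1 ≤ c ∧ c ≤ 1 := by
    have h1 : 2*c ≤ 3 := by nlinarith [sq_nonneg (c-1)]
    have h2 : -3 ≤ 2*c := by nlinarith [sq_nonneg (c+1)]
    omega
  have bd : -1 ≤ d ∧ d ≤ 1 := by
    have h1 : 2*d ≤ 3 := by nlinarith [sq_nonneg (d-1)]
    have h2 : -3 ≤ 2*d := by nlinarith [sq_nonneg (d+1)]
    omega
  have be : -1 ≤ e ∧ e ≤ 1 := by
    have h1 : 2*e ≤ 3 := by nlinarith [sq_nonneg (e-1)]
    have h2 : -3 ≤ 2*e := by nlinarith [sq_nonneg (e+1)]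
    omega
  have bf : -1 ≤ f ∧ f ≤ 1 := by
    have h1 : 2*f ≤ 3 := by nlinarith [sq_nonneg (f-1)]
    have h2 : -3 ≤ 2*f := by nlinarith [sq_nonneg (f+1)]
    omega
  obtain ⟨ha1, ha2⟩ := ba; obtain ⟨hb1, hb2⟩ := bb; obtain ⟨hc1, hc2⟩ := bc
  obtain ⟨hd1, hd2⟩ := bd; obtain ⟨he1, he2⟩ := be; obtain ⟨hf1, hf2⟩ := bf
  clear hsa hsb hsc hsd hse hsf
  revert h
  interval_cases a <;> interval_cases b <;> interval_cases c <;>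
    interval_cases d <;> interval_cases e <;> interval_cases f <;> decide

def S14 : Finset (Fin 6 → ℤ) :=
  {![1,0,0,0,0,0], ![-1,0,0,0,0,0], ![0,1,0,0,0,0], ![0,-1,0,0,0,0],
   ![0,0,1,0,0,0], ![0,0,-1,0,0,0], ![0,0,0,1,0,0], ![0,0,0,-1,0,0],
   ![0,0,0,0,1,0], ![0,0,0,0,-1,0], ![0,0,0,0,0,1], ![0,0,0,0,0,-1],
   ![1,1,1,1,1,1], ![-1,-1,-1,-1,-1,-1]}

lemma S14card : S14.card = 14 := by decide

lemma normS14 : ∀ v ∈ S14, dotProduct v (Cmat.mulVec v) = -4 := by decide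

set_option synthInstance.maxSize 4000 in
lemma charAll (x : Fin 6 → ℤ) (h : -(dotProduct x (Cmat.mulVec x)) ≤ 4) :
    x = 0 ∨ x ∈ S14 := by
  have hq := Qexpand x
  have h4 : 4*((x 0)^2+(x 1)^2+(x 2)^2+(x 3)^2+(x 4)^2+(x 5)^2)
        - 2*((x 0)*(x 1)+(x 0)*(x 2)+(x 0)*(x 5)+(x 1)*(x 2)+(x 1)*(x 3)
            +(x 2)*(x 3)+(x 2)*(x 4)+(x 3)*(x 4)+(x 3)*(x 5)+(x 4)*(x 5)) ≤ 4 := by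
    omega
  have hx : x = ![x 0, x 1, x 2, x 3, x 4, x 5] := by
    funext i; fin_cases i <;> rfl
  rcases key (x 0) (x 1) (x 2) (x 3) (x 4) (x 5) h4 with
    h|h|h|h|h|h|h|h|h|h|h|h|h|h|h <;>
  · simp only [Prod.mk.injEq] at h
    obtain ⟨e0, e1, e2, e3, e4, e5⟩ := h
    rw [hx, e0, e1, e2, e3, e4, e5]
    decide

lemma memS14 (x : Fin 6 → ℤ) (h : dotProduct x (Cmat.mulVec x) = -4) :
    x ∈ S14 := by
  rcases charAll x (by rw [h]; norm_num) with h0 | hm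
  · exfalso
    rw [h0, Qexpand] at h
    simp at h
  · exact hm

lemma minbound (x : Fin 6 → ℤ) (hx : x ≠ 0) :
    4 ≤ -(dotProduct x (Cmat.mulVec x)) := by
  by_contra hc
  push_neg at hc
  rcases charAll x (by omega) with h0 | hm
  · exact hx h0
  · have := normS14 x hm
    omega

lemma hfrom : ∀ v ∈ S14, ∃ m ∈ Submonoid.closure {-(1 : Matrix (Fin 6) (Fin 6) ℤ), gC},
    m.mulVec ![1,0,0,0,0,0] = v := by
  have hn : -(1 : Matrix (Fin 6) (Fin 6) ℤ) ∈ Submonoid.closure {-(1 : Matrix (Fin 6) (Fin 6) ℤ), gC} :=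
    Submonoid.subset_closure (Set.mem_insert _ _)
  have hg : gC ∈ Submonoid.closure {-(1 : Matrix (Fin 6) (Fin 6) ℤ), gC} :=
    Submonoid.subset_closure (Set.mem_insert_iff.mpr (Or.inr rfl))
  intro v hv
  fin_cases hv
  · exact ⟨gC^0, pow_mem hg 0, by decide⟩
  · exact ⟨-1 * gC^0, mul_mem hn (pow_mem hg 0), by decide⟩
  · exact ⟨gC^1, pow_mem hg 1, by decide⟩
  · exact ⟨-1 * gC^1, mul_mem hn (pow_mem hg 1), by decide⟩
  · exact ⟨gC^2, pow_mem hg 2, by decide⟩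
  · exact ⟨-1 * gC^2, mul_mem hn (pow_mem hg 2), by decide⟩
  · exact ⟨gC^3, pow_mem hg 3, by decide⟩
  · exact ⟨-1 * gC^3, mul_mem hn (pow_mem hg 3), by decide⟩
  · exact ⟨gC^4, pow_mem hg 4, by decide⟩
  · exact ⟨-1 * gC^4, mul_mem hn (pow_mem hg 4), by decide⟩
  · exact ⟨gC^5, pow_mem hg 5, by decide⟩
  · exact ⟨-1 * gC^5, mul_mem hn (pow_mem hg 5), by decide⟩
  · exact ⟨-1 * gC^6, mul_mem hn (pow_mem hg 6), by decide⟩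
  · exact ⟨gC^6, pow_mem hg 6, by decide⟩

lemma hto : ∀ v ∈ S14, ∃ m ∈ Submonoid.closure {-(1 : Matrix (Fin 6) (Fin 6) ℤ), gC},
    m.mulVec v = ![1,0,0,0,0,0] := by
  have hn : -(1 : Matrix (Fin 6) (Fin 6) ℤ) ∈ Submonoid.closure {-(1 : Matrix (Fin 6) (Fin 6) ℤ), gC} :=
    Submonoid.subset_closure (Set.mem_insert _ _)
  have hg : gC ∈ Submonoid.closure {-(1 : Matrix (Fin 6) (Fin 6) ℤ), gC} :=
    Submonoid.subset_closure (Set.mem_insert_iff.mpr (Or.inr rfl))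
  intro v hv
  fin_cases hv
  · exact ⟨gC^0, pow_mem hg 0, by decide⟩
  · exact ⟨-1 * gC^0, mul_mem hn (pow_mem hg 0), by decide⟩
  · exact ⟨gC^6, pow_mem hg 6, by decide⟩
  · exact ⟨-1 * gC^6, mul_mem hn (pow_mem hg 6), by decide⟩
  · exact ⟨gC^5, pow_mem hg 5, by decide⟩
  · exact ⟨-1 * gC^5, mul_mem hn (pow_mem hg 5), by decide⟩
  · exact ⟨gC^4, pow_mem hg 4, by decide⟩
  · exact ⟨-1 * gC^4, mul_mem hn (pow_mem hg 4), by decide⟩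
  · exact ⟨gC^3, pow_mem hg 3, by decide⟩
  · exact ⟨-1 * gC^3, mul_mem hn (pow_mem hg 3), by decide⟩
  · exact ⟨gC^2, pow_mem hg 2, by decide⟩
  · exact ⟨-1 * gC^2, mul_mem hn (pow_mem hg 2), by decide⟩
  · exact ⟨-1 * gC^1, mul_mem hn (pow_mem hg 1), by decide⟩
  · exact ⟨gC^1, pow_mem hg 1, by decide⟩

/-- `g_C` is an isometry of `C`; the minimum of the positive definite
lattice `C(−1)` is 4; there are exactly 14 minimal vectors (7 up to sign); and the
minimal vectors form a single orbit under the group generated by `−I` and `g_C`. -/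
theorem Cmat_minimal_vectors :
    gC.transpose * Cmat * gC = Cmat ∧
      (∀ x : Fin 6 → ℤ, x ≠ 0 → 4 ≤ -(dotProduct x (Cmat.mulVec x))) ∧
      Set.ncard {x : Fin 6 → ℤ | dotProduct x (Cmat.mulVec x) = -4} = 14 ∧
      ∀ x y : Fin 6 → ℤ,
        dotProduct x (Cmat.mulVec x) = -4 →
        dotProduct y (Cmat.mulVec y) = -4 →
        ∃ m ∈ Submonoid.closure {-(1 : Matrix (Fin 6) (Fin 6) ℤ), gC},
          m.mulVec x = y := by
  refine ⟨by decide, minbound, ?_, ?_⟩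
  · have hset : {x : Fin 6 → ℤ | dotProduct x (Cmat.mulVec x) = -4} = ↑S14 := by
      ext x
      simp only [Set.mem_setOf_eq, Finset.mem_coe]
      exact ⟨memS14 x, normS14 x⟩
    rw [hset, Set.ncard_coe_finset, S14card]
  · intro x y hx hy
    obtain ⟨p, hp, hpx⟩ := hto x (memS14 x hx)
    obtain ⟨q, hq, hqy⟩ := hfrom y (memS14 y hy)
    exact ⟨q * p, mul_mem hq hp, by rw [← Matrix.mulVec_mulVec, hpx, hqy]⟩
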